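/- Let d be an odd positive integer and let γ = (γ_1,…,γ_d) and Γ = (Γ_1,…,Γ_d) be two left-handed Clifford families of size d, acting on ℂ^n with n = 2^{(d−1)/2}. For j = 1,…,d set T_j = γ_j ⊗ Γ_j (Kronecker product, an n²×n² matrix); these are commuting self-adjoint involutions. For η = (η_1,…,η_d) ∈ {−1,1}^d let F_η = ⋂_{j=1}^d ker(T_j − η_j·𝟙) ⊆ ℂ^{n²}. Then the complex dimension of F_η equals 1 if either (d ≡ 1 mod 4 and the number of indices j with η_j = −1 is even) or (d ≡ 3 mod 4 and the number of indices j with η_j = −1 is odd), and the dimension of F_η equals 0 otherwise. -/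

import Mathlib

open Matrix Kronecker

section wjedaux
variable {R : Type*} [Ring R] {ι : Type*}

/-- moving an element anticommuting with every list element through the product. -/
lemma wjed_anticomm_prod (g : R) (l : List R) (h : ∀ x ∈ l, g * x = -(x * g)) :
    g * l.prod = (-1 : ℤ) ^ l.length • (l.prod * g) := by
  induction l with
  | nil => simp
  | cons a t ih =>
    have ha := h a (by simp)
    have ih' := ih (fun x hx => h x (by simp [hx]))
    simp only [List.prod_cons, List.length_cons]
    calc g * (a * t.prod) = (g * a) * t.prod := by rw [mul_assoc]
      _ = -(a * (g * t.prod)) := by rw [ha, neg_mul, mul_assoc]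
      _ = -(a * ((-1:ℤ) ^ t.length • (t.prod * g))) := by rw [ih']
      _ = (-1:ℤ) ^ (t.length + 1) • (a * t.prod * g) := by
          rw [mul_smul_comm, ← neg_smul, pow_succ, mul_neg_one, mul_assoc]

lemma wjed_trace_zero_of_anticonj {n : ℕ} (g X : Matrix (Fin n) (Fin n) ℂ)
    (hg : g * g = 1) (h : g * X = -(X * g)) : X.trace = 0 := by
  have h1 : X.trace = -(X.trace) := by
    calc X.trace = ((g * g) * X).trace := by rw [hg, one_mul]
      _ = (g * (g * X)).trace := by rw [mul_assoc]
      _ = ((g * X) * g).trace := Matrix.trace_mul_comm _ _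
      _ = (-(X * g) * g).trace := by rw [h]
      _ = -((X * (g * g)).trace) := by rw [neg_mul, trace_neg, mul_assoc]
      _ = -(X.trace) := by rw [hg, mul_one]
  have h2 : (2:ℂ) * X.trace = 0 := by linear_combination h1
  simpa [two_ne_zero] using h2



lemma wjed_expand (f : ι → R) (l : List ι) :
    (l.map (fun j => 1 + f j)).prod
      = (l.sublists'.map (fun s => (s.map f).prod)).sum := by
  induction l with
  | nil => simp
  | cons a t ih =>
    rw [List.map_cons, List.prod_cons, List.sublists'_cons, List.map_append, List.sum_append,
      List.map_map, ih, add_mul, one_mul]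
    congr 1
    rw [← List.sum_map_mul_left]
    apply congrArg
    apply List.map_congr_left
    intro s _
    simp

lemma wjed_smul_prod {I : Type*} [Fintype I] [DecidableEq I] (c : ι → ℂ)
    (f : ι → Matrix I I ℂ) (l : List ι) :
    (l.map (fun j => c j • f j)).prod = (l.map c).prod • (l.map f).prod := by
  induction l with
  | nil => simp
  | cons a t ih =>
    simp only [List.map_cons, List.prod_cons, ih, smul_mul_assoc, mul_smul_comm, smul_smul, mul_comm]

lemma wjed_idem_mul_prod (l : List R) (x : R)
    (hx : x ∈ l) (hcomm : ∀ y ∈ l, ∀ z ∈ l, y * z = z * y) (hidem : x * x = x) :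
    x * l.prod = l.prod := by
  induction l with
  | nil => simp at hx
  | cons a t ih =>
    rw [List.prod_cons]
    rcases List.mem_cons.mp hx with rfl | hxt
    · rw [← mul_assoc, hidem]
    · have hxa : x * a = a * x := hcomm x hx a (by simp)
      rw [← mul_assoc, hxa, mul_assoc, ih hxt
        (fun y hy z hz => hcomm y (by simp [hy]) z (by simp [hz]))]

lemma wjed_trace_list_sum {I : Type*} [Fintype I] (l : List (Matrix I I ℂ)) :
    l.sum.trace = (l.map Matrix.trace).sum :=
  map_list_sum (Matrix.traceLinearMap I ℂ ℂ).toAddMonoidHom l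

lemma wjed_kron_prod {I J : Type*} [Fintype I] [DecidableEq I] [Fintype J] [DecidableEq J]
    (γ : ι → Matrix I I ℂ) (Γm : ι → Matrix J J ℂ) (l : List ι) :
    (l.map (fun j => γ j ⊗ₖ Γm j)).prod = (l.map γ).prod ⊗ₖ (l.map Γm).prod := by
  induction l with
  | nil => simp [Matrix.one_kronecker_one]
  | cons a t ih => simp [List.prod_cons, ih, Matrix.mul_kronecker_mul]


/-- trace of a product of distinct Clifford generators, not all of them, is zero. -/
lemma wjed_clifford_trace_zero {d n : ℕ} (γ : Fin d → Matrix (Fin n) (Fin n) ℂ)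
    (hsq : ∀ i, γ i * γ i = 1)
    (hac : ∀ i j, i ≠ j → γ i * γ j = -(γ j * γ i))
    (s : List (Fin d)) (hnd : s.Nodup) (hne : s ≠ []) (hlen : s.length < d) :
    ((s.map γ).prod).trace = 0 := by
  rcases Nat.even_or_odd s.length with hev | hod
  · -- even length, nonempty : take g = head
    obtain ⟨a, t, rfl⟩ := List.exists_cons_of_ne_nil hne
    have hat : a ∉ t := (List.nodup_cons.mp hnd).1
    have htodd : Odd t.length := by
      rcases hev with ⟨k, hk⟩
      simp only [List.length_cons] at hk
      exact ⟨k - 1, by omega⟩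
    have hanti : γ a * (t.map γ).prod = -((t.map γ).prod * γ a) := by
      have := wjed_anticomm_prod (γ a) (t.map γ) (by
        intro x hx
        obtain ⟨b, hb, rfl⟩ := List.mem_map.mp hx
        exact hac a b (fun hab => hat (hab ▸ hb)))
      rwa [List.length_map, htodd.neg_one_pow, neg_smul, one_smul] at this
    apply wjed_trace_zero_of_anticonj (γ a) _ (hsq a)
    rw [List.map_cons, List.prod_cons]
    have h1 : (t.map γ).prod * γ a = -(γ a * (t.map γ).prod) := by rw [hanti, neg_neg]
    calc γ a * (γ a * (t.map γ).prod) = (γ a * γ a) * (t.map γ).prod := by rw [mul_assoc]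
      _ = (t.map γ).prod := by rw [hsq a, one_mul]
      _ = -(γ a * (t.map γ).prod * γ a) := by
          rw [mul_assoc, h1, mul_neg, ← mul_assoc, hsq a, one_mul, neg_neg]
  · -- odd length: take m outside s
    have hmex : ∃ m, m ∉ s := by
      by_contra hall
      push_neg at hall
      have : (Finset.univ : Finset (Fin d)).card ≤ s.toFinset.card :=
        Finset.card_le_card (fun m _ => List.mem_toFinset.mpr (hall m))
      rw [List.toFinset_card_of_nodup hnd, Finset.card_univ, Fintype.card_fin] at this
      omega
    obtain ⟨m, hm⟩ := hmex
    apply wjed_trace_zero_of_anticonj (γ m) _ (hsq m)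
    have := wjed_anticomm_prod (γ m) (s.map γ) (by
      intro x hx
      obtain ⟨b, hb, rfl⟩ := List.mem_map.mp hx
      exact hac m b (fun hab => hm (hab ▸ hb)))
    rwa [List.length_map, hod.neg_one_pow, neg_smul, one_smul] at this


end wjedaux

/-- joint eigenspaces of the commuting involutions `γ_j ⊗ Γ_j` built from two
left-handed Clifford families of odd size `d`. -/
theorem weyl_joint_eigenspace_dim
    (d : ℕ) (hd : Odd d) (n : ℕ) (hn : n = 2 ^ ((d - 1) / 2))
    (γ Γm : Fin d → Matrix (Fin n) (Fin n) ℂ)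
    (hγsa : ∀ j, (γ j)ᴴ = γ j)
    (hγac : ∀ i j, γ i * γ j + γ j * γ i =
      if i = j then (2 : ℂ) • (1 : Matrix (Fin n) (Fin n) ℂ) else 0)
    (hγhand : (List.ofFn γ).prod = (Complex.I) ^ ((d - 1) / 2) • (1 : Matrix (Fin n) (Fin n) ℂ))
    (hΓsa : ∀ j, (Γm j)ᴴ = Γm j)
    (hΓac : ∀ i j, Γm i * Γm j + Γm j * Γm i =
      if i = j then (2 : ℂ) • (1 : Matrix (Fin n) (Fin n) ℂ) else 0)
    (hΓhand : (List.ofFn Γm).prod = (Complex.I) ^ ((d - 1) / 2) • (1 : Matrix (Fin n) (Fin n) ℂ))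
    (η : Fin d → ℤ) (hη : ∀ j, η j = 1 ∨ η j = -1) :
    Module.finrank ℂ
      ↥(⨅ j : Fin d, LinearMap.ker
          (Matrix.mulVecLin
            (Matrix.kroneckerMap (· * ·) (γ j) (Γm j)
              - (η j : ℂ) • (1 : Matrix (Fin n × Fin n) (Fin n × Fin n) ℂ)))) =
      (if (d % 4 = 1 ∧ Even ((Finset.univ.filter fun j => η j = -1)).card)
          ∨ (d % 4 = 3 ∧ Odd ((Finset.univ.filter fun j => η j = -1)).card)
        then 1 else 0) := by
  classical
  have hd1 : d % 2 = 1 := Nat.odd_iff.mp hd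
  set q : ℕ := (d - 1) / 2 with hqdef
  have hq : 2 * q = d - 1 := by omega
  -- squares and anticommutation
  have sq_of : ∀ (g : Fin d → Matrix (Fin n) (Fin n) ℂ),
      (∀ i j, g i * g j + g j * g i =
        if i = j then (2 : ℂ) • (1 : Matrix (Fin n) (Fin n) ℂ) else 0) →
      (∀ i, g i * g i = 1) := by
    intro g hg i
    have h := hg i i
    rw [if_pos rfl] at h
    have h2 : (2:ℂ) • (g i * g i) = (2:ℂ) • (1 : Matrix (Fin n) (Fin n) ℂ) := by
      rw [two_smul]; exact h
    exact smul_right_injective _ (two_ne_zero) h2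
  have ac_of : ∀ (g : Fin d → Matrix (Fin n) (Fin n) ℂ),
      (∀ i j, g i * g j + g j * g i =
        if i = j then (2 : ℂ) • (1 : Matrix (Fin n) (Fin n) ℂ) else 0) →
      (∀ i j, i ≠ j → g i * g j = -(g j * g i)) := by
    intro g hg i j hij
    have h := hg i j
    rw [if_neg hij] at h
    linear_combination (norm := abel) h
  have hγsq := sq_of γ hγac
  have hΓsq := sq_of Γm hΓac
  have hγac' := ac_of γ hγac
  have hΓac' := ac_of Γm hΓac
  have hηsq : ∀ j, (η j : ℂ) * (η j : ℂ) = 1 := by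
    intro j; rcases hη j with h | h <;> rw [h] <;> norm_num
  set T : Fin d → Matrix (Fin n × Fin n) (Fin n × Fin n) ℂ :=
    fun j => Matrix.kroneckerMap (· * ·) (γ j) (Γm j) with hTdef
  have hTk : ∀ j, T j = γ j ⊗ₖ Γm j := fun j => rfl
  have hTsq : ∀ j, T j * T j = 1 := by
    intro j
    rw [hTk, ← Matrix.mul_kronecker_mul, hγsq, hΓsq, Matrix.one_kronecker_one]
  have hTcomm : ∀ i j, T i * T j = T j * T i := by
    intro i j
    rcases eq_or_ne i j with rfl | hij
    · rfl
    · have h1 : γ i * γ j = (-1:ℂ) • (γ j * γ i) := by rw [hγac' i j hij, neg_smul, one_smul]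
      have h2 : Γm i * Γm j = (-1:ℂ) • (Γm j * Γm i) := by rw [hΓac' i j hij, neg_smul, one_smul]
      rw [hTk, hTk, ← Matrix.mul_kronecker_mul, ← Matrix.mul_kronecker_mul, h1, h2,
        Matrix.smul_kronecker, Matrix.kronecker_smul, smul_smul, neg_one_mul, neg_neg, one_smul]
  set Q : Fin d → Matrix (Fin n × Fin n) (Fin n × Fin n) ℂ :=
    fun j => (2:ℂ)⁻¹ • (1 + (η j : ℂ) • T j) with hQdef
  set l : List (Fin d) := List.finRange d with hldef
  set Pm : Matrix (Fin n × Fin n) (Fin n × Fin n) ℂ := (l.map Q).prod with hPmdef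
  have hTQ : ∀ j, T j * Q j = (η j : ℂ) • Q j := by
    intro j
    rw [hQdef]
    simp only [mul_smul_comm, smul_smul, mul_add, mul_one, mul_smul_comm, hTsq j,
      smul_add, smul_smul, hηsq j]
    rw [mul_comm ((η j : ℂ)) ((2:ℂ)⁻¹), mul_left_comm, hηsq j, mul_one, add_comm]
  have hQcomm : ∀ i j, Q i * Q j = Q j * Q i := by
    intro i j
    have h : Commute ((η i : ℂ) • T i) ((η j : ℂ) • T j) := by
      unfold Commute SemiconjBy
      rw [smul_mul_assoc, mul_smul_comm, smul_mul_assoc, mul_smul_comm, hTcomm i j, smul_comm]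
    have tot : Commute (1 + (η i : ℂ) • T i) (1 + (η j : ℂ) • T j) :=
      (Commute.one_left _).add_left ((Commute.one_right _).add_right h)
    rw [hQdef]
    simp only
    rw [smul_mul_assoc, mul_smul_comm, smul_mul_assoc, mul_smul_comm, tot.eq]
  have hQidem : ∀ j, Q j * Q j = Q j := by
    intro j
    have ha : ((η j : ℂ) • T j) * ((η j : ℂ) • T j) = 1 := by
      rw [smul_mul_assoc, mul_smul_comm, smul_smul, hηsq j, one_smul, hTsq j]
    rw [hQdef]
    simp only
    rw [smul_mul_assoc, mul_smul_comm, smul_smul, add_mul, mul_add, mul_add, ha]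
    simp only [one_mul, mul_one]
    module
  have hQP : ∀ j, Q j * Pm = Pm := by
    intro j
    apply wjed_idem_mul_prod _ _ _ _ (hQidem j)
    · exact List.mem_map.mpr ⟨j, by simp [hldef], rfl⟩
    · intro y hy z hz
      obtain ⟨a, _, rfl⟩ := List.mem_map.mp hy
      obtain ⟨b, _, rfl⟩ := List.mem_map.mp hz
      exact hQcomm a b
  have hTP : ∀ j, T j * Pm = (η j : ℂ) • Pm := by
    intro j
    calc T j * Pm = T j * (Q j * Pm) := by rw [hQP]
      _ = (T j * Q j) * Pm := by rw [mul_assoc]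
      _ = (η j : ℂ) • (Q j * Pm) := by rw [hTQ, smul_mul_assoc]
      _ = (η j : ℂ) • Pm := by rw [hQP]
  set K : Submodule ℂ (Fin n × Fin n → ℂ) :=
    ⨅ j : Fin d, LinearMap.ker
          (Matrix.mulVecLin (T j - (η j : ℂ) • (1 : Matrix (Fin n × Fin n) (Fin n × Fin n) ℂ)))
    with hKdef
  have hmemK : ∀ x, x ∈ K ↔ ∀ j, (T j).mulVec x = (η j : ℂ) • x := by
    intro x
    rw [hKdef, Submodule.mem_iInf]
    apply forall_congr'
    intro j
    rw [LinearMap.mem_ker, Matrix.mulVecLin_apply, Matrix.sub_mulVec, sub_eq_zero,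
      Matrix.smul_mulVec, Matrix.one_mulVec]
  have hproj : LinearMap.IsProj K (Matrix.mulVecLin Pm) := by
    constructor
    · intro x
      rw [hmemK]
      intro j
      rw [Matrix.mulVecLin_apply, Matrix.mulVec_mulVec, hTP j, Matrix.smul_mulVec]
    · intro x hx
      rw [hmemK] at hx
      have hQx : ∀ j, (Q j).mulVec x = x := by
        intro j
        rw [hQdef]
        simp only [Matrix.smul_mulVec, Matrix.add_mulVec, Matrix.one_mulVec,
          Matrix.smul_mulVec, hx j, smul_smul, hηsq j, one_smul]
        rw [← two_smul ℂ x, smul_smul]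
        norm_num
      rw [Matrix.mulVecLin_apply, hPmdef]
      have : ∀ s : List (Fin d), (∀ j ∈ s, True) → ((s.map Q).prod).mulVec x = x := by
        intro s _
        induction s with
        | nil => simp
        | cons a t ih =>
          rw [List.map_cons, List.prod_cons, ← Matrix.mulVec_mulVec, ih (by simp), hQx a]
      exact this l (by simp)
  -- the dimension equals the trace of Pm
  have htr : (Module.finrank ℂ K : ℂ) = Pm.trace := by
    rw [← hproj.trace]
    rw [LinearMap.trace_eq_matrix_trace ℂ (Pi.basisFun ℂ (Fin n × Fin n)),
      LinearMap.toMatrix_eq_toMatrix']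
    congr 1
    rw [← Matrix.toLin'_apply' Pm, LinearMap.toMatrix'_toLin']
  -- compute the trace
  set m : ℕ := ((Finset.univ.filter fun j => η j = -1)).card with hmdef
  have htrace_val : Pm.trace = if Even (q + m) then 1 else 0 := by
    have hlnodup : l.Nodup := List.nodup_finRange d
    have hllen : l.length = d := List.length_finRange
    have hdpos : 0 < d := by omega
    have hlne : l ≠ [] := by
      intro h
      rw [h] at hllen
      simp at hllen
      omega
    have hcard : ((Fintype.card (Fin n × Fin n) : ℕ) : ℂ) = 2 ^ (d - 1) := by
      rw [Fintype.card_prod, Fintype.card_fin, hn]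
      push_cast
      rw [← pow_add]
      congr 1
      omega
    set A : Fin d → Matrix (Fin n × Fin n) (Fin n × Fin n) ℂ :=
      fun j => (η j : ℂ) • T j with hAdef
    set W : Matrix (Fin n × Fin n) (Fin n × Fin n) ℂ := (l.map (fun j => 1 + A j)).prod with hWdef
    have hPW : Pm = ((2:ℂ)⁻¹) ^ d • W := by
      rw [hPmdef, hWdef]
      have hQ' : Q = fun j => (2:ℂ)⁻¹ • (1 + A j) := by
        funext j
        rw [hQdef, hAdef]
      have hsm := wjed_smul_prod (fun _ : Fin d => (2:ℂ)⁻¹) (fun j => 1 + A j) l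
      rw [hQ', hsm, List.map_const', List.prod_replicate, hllen]
    -- the trace of each term in the expansion
    have hterm : ∀ s ∈ l.sublists',
        (((s.map A).prod)).trace
          = (if s = [] then ((2:ℂ)) ^ (d-1) else 0)
            + (if s = l then (-1:ℂ) ^ (m + q) * 2 ^ (d-1) else 0) := by
      intro s hs
      have hssub : s.Sublist l := List.mem_sublists'.mp hs
      have hsnodup : s.Nodup := hssub.nodup hlnodup
      have hAT : (s.map A).prod
          = (s.map (fun j => (η j : ℂ))).prod • ((s.map γ).prod ⊗ₖ (s.map Γm).prod) := by
        have h1 := wjed_smul_prod (fun j => (η j : ℂ)) T s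
        have h2 : s.map T = s.map (fun j => γ j ⊗ₖ Γm j) := rfl
        rw [hAdef, h1, h2, wjed_kron_prod]
      rcases eq_or_ne s [] with rfl | hsne
      · rw [if_pos rfl, if_neg (Ne.symm hlne)]
        simp only [List.map_nil, List.prod_nil, Matrix.trace_one, add_zero]
        exact hcard
      · rcases eq_or_ne s l with rfl | hsnl
        · rw [if_neg hsne, if_pos rfl, zero_add, hAT, Matrix.trace_smul, Matrix.trace_kronecker]
          have hγl : (l.map γ).prod = Complex.I ^ q • 1 := by
            rw [hldef, ← List.ofFn_eq_map, hγhand]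
          have hΓl : (l.map Γm).prod = Complex.I ^ q • 1 := by
            rw [hldef, ← List.ofFn_eq_map, hΓhand]
          have hηprod : (l.map (fun j => (η j : ℂ))).prod = (-1:ℂ) ^ m := by
            rw [hldef, ← List.ofFn_eq_map, List.prod_ofFn]
            have : ∀ j : Fin d, ((η j : ℂ)) = (if η j = -1 then (-1:ℂ) else 1) := by
              intro j
              rcases hη j with h | h <;> rw [h] <;> norm_num
            rw [Finset.prod_congr rfl (fun j _ => this j), Finset.prod_ite, Finset.prod_const,
              Finset.prod_const, one_pow, mul_one, hmdef]
          rw [hγl, hΓl, hηprod, Matrix.trace_smul, Matrix.trace_one, Fintype.card_fin]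
          have hI2 : (Complex.I ^ q) * (Complex.I ^ q) = (-1:ℂ) ^ q := by
            rw [← pow_add, ← two_mul, pow_mul, Complex.I_sq]
          have hnc : ((Fintype.card (Fin n × Fin n) : ℕ) : ℂ)
              = ((n : ℂ)) * ((n : ℂ)) := by
            push_cast [Fintype.card_prod, Fintype.card_fin]
            ring
          rw [smul_eq_mul, smul_eq_mul, pow_add]
          have hn2 : ((n:ℂ)) * ((n:ℂ)) = 2 ^ (d-1) := by
            rw [← hnc, hcard]
          calc (-1:ℂ) ^ m * (Complex.I ^ q * ↑n * (Complex.I ^ q * ↑n))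
              = (-1:ℂ) ^ m * ((Complex.I ^ q * Complex.I ^ q) * ((n:ℂ) * (n:ℂ))) := by ring
            _ = (-1:ℂ) ^ m * ((-1:ℂ) ^ q * 2 ^ (d-1)) := by rw [hI2, hn2]
            _ = (-1:ℂ) ^ m * (-1:ℂ) ^ q * 2 ^ (d-1) := by ring
        · rw [if_neg hsne, if_neg hsnl, hAT, Matrix.trace_smul, Matrix.trace_kronecker]
          have hlen : s.length < d := by
            have hle : s.length ≤ l.length := hssub.length_le
            rcases lt_or_eq_of_le hle with h | h
            · omega
            · exact absurd (hssub.eq_of_length h) hsnl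
          rw [wjed_clifford_trace_zero γ hγsq hγac' s hsnodup hsne hlen]
          simp
    -- sum it up
    have hWtr : W.trace = 2 ^ (d - 1) + (-1:ℂ) ^ (m + q) * 2 ^ (d - 1) := by
      have hWexp := wjed_expand A l
      rw [hWdef, hWexp, wjed_trace_list_sum, List.map_map, Function.comp_def]
      have hsubnodup : l.sublists'.Nodup := List.nodup_sublists'.mpr hlnodup
      rw [← List.sum_toFinset _ hsubnodup]
      rw [Finset.sum_congr rfl (fun s hs => hterm s (List.mem_toFinset.mp hs))]
      rw [Finset.sum_add_distrib, Finset.sum_ite_eq' _ ([] : List (Fin d)),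
        Finset.sum_ite_eq' _ l]
      rw [if_pos (List.mem_toFinset.mpr (List.mem_sublists'.mpr (List.nil_sublist l))),
        if_pos (List.mem_toFinset.mpr (List.mem_sublists'.mpr (List.Sublist.refl l)))]
    rw [hPW, Matrix.trace_smul, hWtr, smul_eq_mul]
    have h2d : (2:ℂ) * 2 ^ (d - 1) = 2 ^ d := by
      rw [← pow_succ']
      congr 1
      omega
    by_cases hpar : Even (q + m)
    · rw [if_pos hpar]
      have hneg : (-1:ℂ) ^ (m + q) = 1 := Even.neg_one_pow (by rwa [Nat.add_comm] at hpar)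
      rw [hneg, one_mul, ← two_mul, h2d, inv_pow, inv_mul_cancel₀ (pow_ne_zero d (two_ne_zero (α := ℂ)))]
    · rw [if_neg hpar]
      have hneg : (-1:ℂ) ^ (m + q) = -1 := by
        apply Odd.neg_one_pow
        rw [Nat.odd_iff]
        rw [Nat.even_iff] at hpar
        omega
      rw [hneg, neg_one_mul, add_neg_cancel, mul_zero]
  have hiff : ((d % 4 = 1 ∧ Even m) ∨ (d % 4 = 3 ∧ Odd m)) ↔ Even (q + m) := by
    rw [Nat.even_iff, Nat.even_iff, Nat.odd_iff, hqdef]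
    omega
  by_cases hc : Even (q + m)
  · rw [if_pos (hiff.mpr hc)]
    have h1 : (Module.finrank ℂ K : ℂ) = 1 := by rw [htr, htrace_val, if_pos hc]
    exact_mod_cast h1
  · rw [if_neg (fun h => hc (hiff.mp h))]
    have h1 : (Module.finrank ℂ K : ℂ) = 0 := by rw [htr, htrace_val, if_neg hc]
    exact_mod_cast h1
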